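/- Let m ≥ 1 and for x = (x_h,x_v) ∈ ℝᵐ × ℝ let σ(x) = [I_m, 0_m ; 0, x_hᵀ] be the Grushin matrix and U(x) = (|x_h|⁴ + 4x_v²)^{1/4}. Define G(x) = |σ(x)ᵀ∇U(x)|². Then U is a classical solution on ℝ^{m+1}∖{0} of the Aronsson equation for the Hamiltonian H²(x,p) = |σ(x)ᵀp|²: for every x ≠ 0, ∇G(x) · (2σ(x)σ(x)ᵀ∇U(x)) = 0, where 2σ(x)σ(x)ᵀ∇U(x) = (H²)_p(x,∇U(x)). -/

import Mathlib

open Set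
open scoped RealInnerProductSpace

/-- The horizontal part of the gradient of `U : ℝᵐ × ℝ → ℝ`. -/
noncomputable def gradH {m : ℕ} (U : EuclideanSpace ℝ (Fin m) × ℝ → ℝ)
    (x : EuclideanSpace ℝ (Fin m) × ℝ) : EuclideanSpace ℝ (Fin m) :=
  (EuclideanSpace.equiv (Fin m) ℝ).symm
    (fun i => fderiv ℝ U x (EuclideanSpace.single i 1, 0))

/-- The vertical part of the gradient of `U : ℝᵐ × ℝ → ℝ`. -/
noncomputable def gradV {m : ℕ} (U : EuclideanSpace ℝ (Fin m) × ℝ → ℝ)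
    (x : EuclideanSpace ℝ (Fin m) × ℝ) : ℝ :=
  fderiv ℝ U x (0, 1)

/-- the gauge function `U` is a classical solution on `ℝ^{m+1} \ {0}`
of the Aronsson equation for the Grushin Hamiltonian
`H²(x,p) = |σ(x)ᵀp|² = |p_h|² + p_v²|x_h|²`: writing
`G(x) = |σ(x)ᵀ∇U(x)|² = |∇_hU(x)|² + (∂_vU(x))²|x_h|²`, the directional derivative
of `G` along `(H²)_p(x,∇U(x)) = 2σ(x)σ(x)ᵀ∇U(x) = (2∇_hU(x), 2∂_vU(x)|x_h|²)`
vanishes. -/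
theorem stmt_15 {m : ℕ} (hm : 1 ≤ m)
    (U : EuclideanSpace ℝ (Fin m) × ℝ → ℝ)
    (hU : ∀ x : EuclideanSpace ℝ (Fin m) × ℝ,
      U x = (‖x.1‖ ^ 4 + 4 * x.2 ^ 2) ^ ((1:ℝ)/4))
    (G : EuclideanSpace ℝ (Fin m) × ℝ → ℝ)
    (hG : ∀ x, G x = ‖gradH U x‖ ^ 2 + (gradV U x) ^ 2 * ‖x.1‖ ^ 2) :
    ∀ x : EuclideanSpace ℝ (Fin m) × ℝ, x ≠ 0 →
      DifferentiableAt ℝ U x ∧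
      ∃ DG : EuclideanSpace ℝ (Fin m) × ℝ →L[ℝ] ℝ,
        HasFDerivAt G DG x ∧
        DG ((2:ℝ) • gradH U x, 2 * gradV U x * ‖x.1‖ ^ 2) = 0 := by
  have hpos : ∀ y : EuclideanSpace ℝ (Fin m) × ℝ, y ≠ 0 →
      0 < ‖y.1‖ ^ 4 + 4 * y.2 ^ 2 := by
    intro y hy
    by_contra hle
    push_neg at hle
    have hn1 : (0:ℝ) ≤ ‖y.1‖ ^ 4 := by positivity
    have hn2 : (0:ℝ) ≤ 4 * y.2 ^ 2 := by positivity
    have e1 : ‖y.1‖ ^ 4 = 0 := by linarith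
    have e2 : y.2 ^ 2 = 0 := by nlinarith
    have hy1 : y.1 = 0 := norm_eq_zero.mp (by
      have := pow_eq_zero_iff (n := 4) (by norm_num) |>.mp e1
      exact this)
    have hy2 : y.2 = 0 := pow_eq_zero_iff (n := 2) (by norm_num) |>.mp e2
    exact hy (Prod.ext hy1 hy2)
  have hUeq : U = fun z : EuclideanSpace ℝ (Fin m) × ℝ =>
      (‖z.1‖^2*‖z.1‖^2 + 4*(z.2*z.2)) ^ ((1:ℝ)/4) := by
    funext z; rw [hU z]; congr 1; ring
  have key : ∀ y : EuclideanSpace ℝ (Fin m) × ℝ, y ≠ 0 →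
      ∃ D : EuclideanSpace ℝ (Fin m) × ℝ →L[ℝ] ℝ, HasFDerivAt U D y ∧
      ∀ v : EuclideanSpace ℝ (Fin m) × ℝ, D v = (‖y.1‖ ^ 4 + 4 * y.2 ^ 2) ^ (-(3:ℝ)/4) *
        (‖y.1‖^2 * ⟪y.1, v.1⟫ + 2 * y.2 * v.2) := by
    intro y hy
    have h1 : HasFDerivAt (fun z : EuclideanSpace ℝ (Fin m) × ℝ => ‖z.1‖^2)
        (2 • (innerSL ℝ y.1).comp (ContinuousLinearMap.fst ℝ (EuclideanSpace ℝ (Fin m)) ℝ)) y :=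
      (hasFDerivAt_fst).norm_sq
    have h2 : HasFDerivAt (fun z : EuclideanSpace ℝ (Fin m) × ℝ => z.2)
        (ContinuousLinearMap.snd ℝ (EuclideanSpace ℝ (Fin m)) ℝ) y := hasFDerivAt_snd
    have hf := (h1.mul h1).add ((h2.mul h2).const_mul (4:ℝ))
    have hne : ‖y.1‖^2*‖y.1‖^2 + 4*(y.2*y.2) ≠ 0 := by
      have := hpos y hy; intro h; apply ne_of_gt this; nlinarith
    have hD := hf.rpow_const (p := (1:ℝ)/4) (Or.inl hne)
    simp only [Pi.add_apply, Pi.mul_apply] at hD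
    rw [← hUeq] at hD
    refine ⟨_, hD, ?_⟩
    intro v
    have hb : ‖y.1‖^2*‖y.1‖^2 + 4*(y.2*y.2) = ‖y.1‖ ^ 4 + 4 * y.2 ^ 2 := by ring
    have he : (1:ℝ)/4 - 1 = -(3:ℝ)/4 := by norm_num
    simp only [ContinuousLinearMap.smul_apply, ContinuousLinearMap.add_apply,
      ContinuousLinearMap.coe_smul', Pi.smul_apply, ContinuousLinearMap.coe_comp',
      Function.comp_apply, ContinuousLinearMap.coe_fst', ContinuousLinearMap.coe_snd',
      innerSL_apply_apply, smul_eq_mul, hb, he]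
    ring
  intro x hx
  obtain ⟨D, hD, hDv⟩ := key x hx
  refine ⟨hD.differentiableAt, ?_⟩
  have hgradH : ∀ y : EuclideanSpace ℝ (Fin m) × ℝ, y ≠ 0 → gradH U y =
      ((‖y.1‖ ^ 4 + 4 * y.2 ^ 2) ^ (-(3:ℝ)/4) * ‖y.1‖^2) • y.1 := by
    intro y hy
    obtain ⟨Dy, hDy, hDyv⟩ := key y hy
    ext i
    show fderiv ℝ U y (EuclideanSpace.single i 1, 0) = _
    rw [hDy.fderiv, hDyv]
    have h5 : ⟪y.1, EuclideanSpace.single i (1:ℝ)⟫ = y.1 i := by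
      simp [EuclideanSpace.inner_single_right]
    simp only [h5, PiLp.smul_apply, smul_eq_mul]
    ring
  have hgradV : ∀ y : EuclideanSpace ℝ (Fin m) × ℝ, y ≠ 0 → gradV U y =
      2 * y.2 * (‖y.1‖ ^ 4 + 4 * y.2 ^ 2) ^ (-(3:ℝ)/4) := by
    intro y hy
    obtain ⟨Dy, hDy, hDyv⟩ := key y hy
    show fderiv ℝ U y (0, 1) = _
    rw [hDy.fderiv, hDyv]
    simp
    ring
  have hGform : ∀ y : EuclideanSpace ℝ (Fin m) × ℝ, y ≠ 0 →
      G y = ‖y.1‖^2 * ((‖y.1‖^2*‖y.1‖^2 + 4*(y.2*y.2)) ^ (-(1:ℝ)/2)) := by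
    intro y hy
    have ht := hpos y hy
    set t := ‖y.1‖ ^ 4 + 4 * y.2 ^ 2 with htdef
    have hb : ‖y.1‖^2*‖y.1‖^2 + 4*(y.2*y.2) = t := by rw [htdef]; ring
    rw [hG y, hgradH y hy, hgradV y hy, norm_smul, hb]
    have h34 : t ^ (-(3:ℝ)/4) * t ^ (-(3:ℝ)/4) = t ^ (-(3:ℝ)/2) := by
      rw [← Real.rpow_add ht]; norm_num
    have habs : |t ^ (-(3:ℝ)/4) * ‖y.1‖^2| = t ^ (-(3:ℝ)/4) * ‖y.1‖^2 := by
      apply abs_of_nonneg; positivity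
    rw [Real.norm_eq_abs, habs]
    have expand : (t ^ (-(3:ℝ)/4) * ‖y.1‖ ^ 2 * ‖y.1‖) ^ 2 +
        (2 * y.2 * t ^ (-(3:ℝ)/4)) ^ 2 * ‖y.1‖ ^ 2
        = (t ^ (-(3:ℝ)/4) * t ^ (-(3:ℝ)/4)) * (‖y.1‖^2 * t) := by
      rw [htdef]; ring
    have h12' : t ^ (-(1:ℝ)/2) = t ^ (-(3:ℝ)/2) * t := by
      rw [show (-(1:ℝ)/2) = (-(3:ℝ)/2) + 1 by norm_num, Real.rpow_add ht, Real.rpow_one]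
    rw [expand, h34, h12']; ring
  have h1 : HasFDerivAt (fun z : EuclideanSpace ℝ (Fin m) × ℝ => ‖z.1‖^2)
      (2 • (innerSL ℝ x.1).comp (ContinuousLinearMap.fst ℝ (EuclideanSpace ℝ (Fin m)) ℝ)) x :=
    (hasFDerivAt_fst).norm_sq
  have h2 : HasFDerivAt (fun z : EuclideanSpace ℝ (Fin m) × ℝ => z.2)
      (ContinuousLinearMap.snd ℝ (EuclideanSpace ℝ (Fin m)) ℝ) x := hasFDerivAt_snd
  have hf := (h1.mul h1).add ((h2.mul h2).const_mul (4:ℝ))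
  have hne : ‖x.1‖^2*‖x.1‖^2 + 4*(x.2*x.2) ≠ 0 := by
    have := hpos x hx; intro h; apply ne_of_gt this; nlinarith
  have hr := hf.rpow_const (p := -(1:ℝ)/2) (Or.inl hne)
  have hG0 := h1.mul hr
  have hGG0 : G =ᶠ[nhds x] (fun z : EuclideanSpace ℝ (Fin m) × ℝ =>
      ‖z.1‖^2 * ((‖z.1‖^2*‖z.1‖^2 + 4*(z.2*z.2)) ^ (-(1:ℝ)/2))) := by
    filter_upwards [IsOpen.mem_nhds isOpen_compl_singleton hx] with y hy
    exact hGform y hy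
  have hGd : HasFDerivAt G _ x := hG0.congr_of_eventuallyEq hGG0
  refine ⟨_, hGd, ?_⟩
  set t := ‖x.1‖ ^ 4 + 4 * x.2 ^ 2 with htdef
  have ht := hpos x hx
  have hb : ‖x.1‖^2*‖x.1‖^2 + 4*(x.2*x.2) = t := by rw [htdef]; ring
  rw [hgradH x hx, hgradV x hx]
  have hw1 : ⟪x.1, (2:ℝ) • ((t ^ (-(3:ℝ)/4) * ‖x.1‖^2) • x.1)⟫
      = 2 * (t ^ (-(3:ℝ)/4) * ‖x.1‖^2) * ‖x.1‖^2 := by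
    rw [real_inner_smul_right, real_inner_smul_right, real_inner_self_eq_norm_sq]
    ring
  simp only [ContinuousLinearMap.add_apply, ContinuousLinearMap.smul_apply,
    ContinuousLinearMap.coe_smul', Pi.smul_apply, ContinuousLinearMap.coe_comp',
    Function.comp_apply, ContinuousLinearMap.coe_fst', ContinuousLinearMap.coe_snd',
    innerSL_apply_apply, Pi.add_apply, Pi.mul_apply, smul_eq_mul, ← htdef, hb, hw1]
  have h34 : t ^ (-(1:ℝ)/2 - 1) = t ^ (-(3:ℝ)/2) := by norm_num
  have h12 : t ^ (-(1:ℝ)/2) = t ^ (-(3:ℝ)/2) * t := by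
    rw [show (-(1:ℝ)/2) = (-(3:ℝ)/2) + 1 by norm_num, Real.rpow_add ht, Real.rpow_one]
  rw [h34, h12, htdef]
  ring
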